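/- Let m ≥ 1 be a natural number and 0 ≤ δ < 1. Define P(z) = (1 − δ/4)z² + (1 − δ/8)z + 1 and P̃(z) = P(z)^{2m} · T_m( (P(z) + P(z)⁻¹) / (2 cos((2/3)δ)) ), where T_m is the degree-m Chebyshev polynomial of the first kind. Then P̃(1) is a real number and satisfies P̃(1) ≥ exp(mδ/12) · |P̃(z)| for every z in the half annulus D_δ = { z ∈ ℂ : δ ≤ |z| ≤ 1 and Re(z) ≤ 0 }. (One checks that P does not vanish on D_δ ∪ {1}, so P(z)⁻¹ is the genuine inverse throughout.) -/

import Mathlib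

/-- The quadratic `P(z) = (1 − δ/4)z² + (1 − δ/8)z + 1`. -/
noncomputable def Pquad (δ : ℝ) (z : ℂ) : ℂ :=
  (1 - (δ : ℂ) / 4) * z ^ 2 + (1 - (δ : ℂ) / 8) * z + 1

lemma cheb_real_eval (n : ℤ) (x : ℝ) :
    (Polynomial.Chebyshev.T ℂ n).eval (x : ℂ)
      = (((Polynomial.Chebyshev.T ℝ n).eval x : ℝ) : ℂ) := by
  rw [← Polynomial.Chebyshev.map_T (algebraMap ℝ ℂ) n, Polynomial.eval_map,
    show ((x : ℝ) : ℂ) = algebraMap ℝ ℂ x from rfl, Polynomial.eval₂_at_apply]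
  rfl

lemma cheb_rec_eval {R : Type*} [CommRing R] (n : ℤ) (x : R) :
    (Polynomial.Chebyshev.T R (n + 2)).eval x
      = 2 * x * (Polynomial.Chebyshev.T R (n + 1)).eval x
        - (Polynomial.Chebyshev.T R n).eval x := by
  rw [Polynomial.Chebyshev.T_add_two]
  simp

lemma cheb_lower (x : ℝ) (hx : 1 ≤ x) : ∀ n : ℕ,
    x ^ n ≤ (Polynomial.Chebyshev.T ℝ (n : ℤ)).eval x ∧
      x * (Polynomial.Chebyshev.T ℝ (n : ℤ)).eval x
        ≤ (Polynomial.Chebyshev.T ℝ ((n : ℤ) + 1)).eval x := by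
  intro n
  induction n with
  | zero => simp [Polynomial.Chebyshev.T_zero, Polynomial.Chebyshev.T_one]
  | succ n ih =>
    obtain ⟨h1, h2⟩ := ih
    have hx0 : (0:ℝ) < x := by linarith
    have hpow : (1:ℝ) ≤ x ^ n := one_le_pow₀ hx
    have hTn : (1:ℝ) ≤ (Polynomial.Chebyshev.T ℝ (n : ℤ)).eval x := le_trans hpow h1
    have hcast : ((n : ℤ) + 1) = ((n + 1 : ℕ) : ℤ) := by push_cast; ring
    constructor
    · rw [← hcast]
      calc x ^ (n + 1) = x * x ^ n := by ring
        _ ≤ x * (Polynomial.Chebyshev.T ℝ (n : ℤ)).eval x := by nlinarith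
        _ ≤ _ := h2
    · have hrec := cheb_rec_eval (R := ℝ) (n : ℤ) x
      have hcast2 : ((n : ℤ) + 2) = ((n + 1 : ℕ) : ℤ) + 1 := by push_cast; ring
      rw [← hcast, show ((n:ℤ)+1+1) = (n:ℤ)+2 by ring, hrec]
      have hTn1 : (Polynomial.Chebyshev.T ℝ (n : ℤ)).eval x
          ≤ (Polynomial.Chebyshev.T ℝ ((n : ℤ) + 1)).eval x := by nlinarith
      have hkey : (Polynomial.Chebyshev.T ℝ (n : ℤ)).eval x
          ≤ x * (Polynomial.Chebyshev.T ℝ ((n : ℤ) + 1)).eval x := by nlinarith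
      linarith

lemma cheb_upper (w : ℂ) : ∀ n : ℕ,
    ‖(Polynomial.Chebyshev.T ℂ (n : ℤ)).eval w‖ ≤ (2 * ‖w‖ + 1) ^ n ∧
      ‖(Polynomial.Chebyshev.T ℂ ((n : ℤ) + 1)).eval w‖
        ≤ (2 * ‖w‖ + 1) ^ (n + 1) := by
  intro n
  have hw0 : 0 ≤ ‖w‖ := norm_nonneg w
  set M : ℝ := 2 * ‖w‖ + 1 with hM
  have hM1 : (1:ℝ) ≤ M := by simp [hM]
  induction n with
  | zero =>
    constructor
    · simp [Polynomial.Chebyshev.T_zero]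
    · simpa [Polynomial.Chebyshev.T_one] using by nlinarith
  | succ n ih =>
    obtain ⟨h1, h2⟩ := ih
    have hcast : ((n : ℤ) + 1) = ((n + 1 : ℕ) : ℤ) := by push_cast; ring
    constructor
    · rw [← hcast]; exact h2
    · rw [← hcast, show ((n:ℤ)+1+1) = (n:ℤ)+2 by ring, cheb_rec_eval]
      have htri : ‖2 * w * (Polynomial.Chebyshev.T ℂ ((n:ℤ)+1)).eval w
            - (Polynomial.Chebyshev.T ℂ (n:ℤ)).eval w‖
          ≤ 2 * ‖w‖ * ‖(Polynomial.Chebyshev.T ℂ ((n:ℤ)+1)).eval w‖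
            + ‖(Polynomial.Chebyshev.T ℂ (n:ℤ)).eval w‖ := by
        calc _ ≤ ‖2 * w * (Polynomial.Chebyshev.T ℂ ((n:ℤ)+1)).eval w‖
              + ‖(Polynomial.Chebyshev.T ℂ (n:ℤ)).eval w‖ := by
              exact norm_sub_le _ _
          _ = _ := by simp [norm_mul, Complex.norm_two]
      have hMn : M ^ n ≤ M ^ (n + 1) := by
        calc M ^ n = 1 * M ^ n := (one_mul _).symm
          _ ≤ M * M ^ n := by
              have : (0:ℝ) ≤ M ^ n := by positivity
              nlinarith
          _ = M ^ (n + 1) := by ring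
      have habs0 : 0 ≤ ‖(Polynomial.Chebyshev.T ℂ ((n:ℤ)+1)).eval w‖ :=
        norm_nonneg _
      calc _ ≤ 2 * ‖w‖ * M ^ (n+1) + M ^ n := by nlinarith [htri]
        _ ≤ M ^ (n + 1 + 1) := by
            have hMn1 : (0:ℝ) ≤ M ^ (n+1) := by positivity
            have : M ^ (n+1+1) = (2 * ‖w‖) * M ^ (n+1) + M ^ (n+1) := by
              rw [hM]; ring
            nlinarith
        
set_option maxHeartbeats 1000000 in
lemma Pquad_abs_le {δ : ℝ} (hδ0 : 0 ≤ δ) (hδ1 : δ ≤ 1) {z : ℂ}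
    (hz : ‖z‖ ≤ 1) (hre : z.re ≤ 0) : ‖Pquad δ z‖ ≤ 1 := by
  set a : ℝ := 1 - δ/4 with ha
  set b : ℝ := 1 - δ/8 with hb
  have ha0 : 0 < a := by rw [ha]; linarith
  have hb0 : 0 < b := by rw [hb]; linarith
  set x : ℝ := z.re with hx
  set y : ℝ := z.im with hy
  have hs : x^2 + y^2 ≤ 1 := by
    have h := Complex.sq_norm z
    rw [Complex.normSq_apply] at h
    nlinarith [norm_nonneg z]
  have hs0 : 0 ≤ x^2 + y^2 := by positivity
  have hc1 : (1 - (δ:ℂ)/4) = ((a : ℝ) : ℂ) := by rw [ha]; push_cast; ring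
  have hc2 : (1 - (δ:ℂ)/8) = ((b : ℝ) : ℂ) := by rw [hb]; push_cast; ring
  have hre' : (Pquad δ z).re = a*(x^2 - y^2) + b*x + 1 := by
    rw [Pquad, hc1, hc2]
    simp only [pow_two, Complex.add_re, Complex.mul_re, Complex.mul_im,
      Complex.ofReal_re, Complex.ofReal_im, Complex.one_re]
    ring
  have him' : (Pquad δ z).im = a*(2*x*y) + b*y := by
    rw [Pquad, hc1, hc2]
    simp only [pow_two, Complex.add_im, Complex.mul_re, Complex.mul_im,
      Complex.ofReal_re, Complex.ofReal_im, Complex.one_im]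
    ring
  have hP2 : ‖Pquad δ z‖ ^ 2 ≤ 1 := by
    rw [Complex.sq_norm, Complex.normSq_apply, hre', him']
    -- the two key brackets
    have hb2a : a^2 + b^2 - 2*a ≤ 0 := by rw [ha, hb]; nlinarith
    have hfac1 : a^2*(x^2+y^2) + (b^2 - 2*a) ≤ 0 := by
      nlinarith [mul_nonneg (show (0:ℝ) ≤ 1 - (x^2+y^2) by linarith) (sq_nonneg a)]
    have h1 : a^2*(x^2+y^2)^2 + (b^2-2*a)*(x^2+y^2) ≤ 0 := by
      nlinarith [mul_nonneg hs0 (neg_nonneg.mpr hfac1)]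
    have h2' : 0 ≤ a*b*(a*b*x^2 + 2*a*x + b) := by
      have hd : 0 ≤ a*(b^2 - a) := by
        rw [ha, hb]; nlinarith [mul_nonneg (show (0:ℝ) ≤ 1 - δ/4 by linarith) (sq_nonneg δ)]
      nlinarith [sq_nonneg (a*b*x + a)]
    have hQ : 0 ≤ a*b*x^2 + 2*a*x + b := by
      have hab : (0:ℝ) < a*b := mul_pos ha0 hb0
      have := div_nonneg h2' hab.le
      rwa [mul_div_cancel_left₀ _ (ne_of_gt hab)] at this
    have hfac2 : 0 ≤ 2*a*x + b*(a*(x^2+y^2)+1) := by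
      nlinarith [mul_nonneg (mul_pos ha0 hb0).le (sq_nonneg y)]
    have hmul : 2*x*(2*a*x + b*(a*(x^2+y^2)+1)) ≤ 0 :=
      mul_nonpos_of_nonpos_of_nonneg (by linarith) hfac2
    have hID : (a*(x^2-y^2)+b*x+1) * (a*(x^2-y^2)+b*x+1) + (a*(2*x*y)+b*y) * (a*(2*x*y)+b*y)
        = 1 + (a^2*(x^2+y^2)^2 + (b^2-2*a)*(x^2+y^2))
          + (2*x*(2*a*x + b*(a*(x^2+y^2)+1))) := by ring
    rw [hID]
    linarith [h1, hmul]
  nlinarith [norm_nonneg (Pquad δ z)]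


/-- The Remez-type polynomial for the half annulus:
`P̃(z) = P(z)^{2m} · T_m((P(z) + P(z)⁻¹)/(2 cos((2/3)δ)))`. -/
noncomputable def Ptilde (m : ℕ) (δ : ℝ) (z : ℂ) : ℂ :=
  (Pquad δ z) ^ (2 * m) * (Polynomial.Chebyshev.T ℂ m).eval
    ((Pquad δ z + (Pquad δ z)⁻¹) / (2 * (Real.cos (2 / 3 * δ) : ℂ)))

set_option maxHeartbeats 1000000 in
/-- For `m ≥ 1` and `0 ≤ δ < 1`, `P̃(1)` is real and
`P̃(1) ≥ exp(mδ/12)·|P̃(z)|` for every `z` in the half annulus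
`D_δ = {z : δ ≤ |z| ≤ 1, Re z ≤ 0}`. -/
theorem halfannulus_remez (m : ℕ) (hm : 1 ≤ m) (δ : ℝ) (hδ0 : 0 ≤ δ) (hδ1 : δ < 1) :
    (Ptilde m δ 1).im = 0 ∧
      ∀ z : ℂ, δ ≤ ‖z‖ → ‖z‖ ≤ 1 → z.re ≤ 0 →
        Real.exp (m * δ / 12) * ‖Ptilde m δ z‖ ≤ (Ptilde m δ 1).re := by
  set c : ℝ := Real.cos (2 / 3 * δ) with hc
  have hc7 : 7/9 ≤ c := by
    have h := Real.one_sub_sq_div_two_le_cos (x := 2/3*δ)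
    rw [← hc] at h
    nlinarith
  have hc1 : c ≤ 1 := by rw [hc]; exact Real.cos_le_one _
  have hc0 : (0:ℝ) < c := by linarith
  set p1 : ℝ := 3 - 3*δ/8 with hp1
  have hp1l : (21/8 : ℝ) ≤ p1 := by rw [hp1]; linarith
  have hp1pos : (0:ℝ) < p1 := lt_of_lt_of_le (by norm_num) hp1l
  set x₁ : ℝ := (p1 + p1⁻¹) / (2*c) with hx₁
  have hinv : (0:ℝ) < p1⁻¹ := inv_pos.mpr hp1pos
  have hx₁ge : p1/2 ≤ x₁ := by
    rw [hx₁, div_le_div_iff₀ (by linarith) (by linarith)]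
    nlinarith
  have hx₁1 : (1:ℝ) ≤ x₁ := by linarith
  have hPq1 : Pquad δ 1 = ((p1 : ℝ) : ℂ) := by rw [Pquad, hp1]; push_cast; ring
  have hPt1 : Ptilde m δ 1 = (((p1^(2*m) * (Polynomial.Chebyshev.T ℝ (m:ℤ)).eval x₁ : ℝ)) : ℂ) := by
    rw [Ptilde, hPq1, ← hc,
      show ((p1:ℂ) + ((p1:ℝ):ℂ)⁻¹)/(2*((c:ℝ):ℂ)) = ((x₁:ℝ):ℂ) by rw [hx₁]; push_cast; ring,
      cheb_real_eval]
    push_cast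
    ring
  have hev : x₁ ^ m ≤ (Polynomial.Chebyshev.T ℝ (m:ℤ)).eval x₁ := (cheb_lower x₁ hx₁1 m).1
  have hevpos : (0:ℝ) < (Polynomial.Chebyshev.T ℝ (m:ℤ)).eval x₁ :=
    lt_of_lt_of_le (by positivity) hev
  have hRlb : (p1^2 * (p1/2))^m ≤ p1^(2*m) * (Polynomial.Chebyshev.T ℝ (m:ℤ)).eval x₁ := by
    calc (p1^2*(p1/2))^m = p1^(2*m) * (p1/2)^m := by rw [mul_pow, ← pow_mul]
      _ ≤ p1^(2*m) * x₁^m := by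
          have := pow_le_pow_left₀ (by positivity : (0:ℝ) ≤ p1/2) hx₁ge m
          exact mul_le_mul_of_nonneg_left this (by positivity)
      _ ≤ _ := mul_le_mul_of_nonneg_left hev (by positivity)
  constructor
  · rw [hPt1]; exact Complex.ofReal_im _
  intro z hz1 hz2 hz3
  have hr1 : ‖Pquad δ z‖ ≤ 1 := Pquad_abs_le hδ0 hδ1.le hz2 hz3
  have hexp : Real.exp (δ/12) ≤ 12/11 := by
    have h := Real.add_one_le_exp (-(δ/12))
    rw [Real.exp_neg] at h
    have hp := Real.exp_pos (δ/12)
    nlinarith [mul_le_mul_of_nonneg_left h hp.le, mul_inv_cancel₀ hp.ne',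
      mul_nonneg hp.le (show (0:ℝ) ≤ 1 - δ by linarith)]
  have hexpm : Real.exp (↑m * δ / 12) = Real.exp (δ/12)^m := by
    rw [← Real.exp_nat_mul]; congr 1; ring
  have hfactor : Real.exp (δ/12) * (25/7) ≤ p1^2 * (p1/2) := by
    have h1 : (21/8:ℝ)^2*(21/16) ≤ p1^2*(p1/2) := by nlinarith
    nlinarith [Real.exp_pos (δ/12)]
  have hbound : ‖Ptilde m δ z‖ ≤ (25/7)^m := by
    by_cases hpz0 : Pquad δ z = 0
    · rw [Ptilde, hpz0, zero_pow (by omega : 2*m ≠ 0), zero_mul, norm_zero]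
      positivity
    · set pz := Pquad δ z with hpz
      set r := ‖pz‖ with hr
      have hrpos : (0:ℝ) < r := by rw [hr]; exact norm_pos_iff.mpr hpz0
      set w : ℂ := (pz + pz⁻¹) / (2 * ((c:ℝ):ℂ)) with hw
      have hu0 : (0:ℝ) ≤ ‖w‖ := norm_nonneg w
      have habsw : ‖w‖ * (2*c) ≤ r + r⁻¹ := by
        rw [hw, norm_div]
        have h2c : ‖2 * ((c:ℝ):ℂ)‖ = 2*c := by
          rw [norm_mul, Complex.norm_two, Complex.norm_real, Real.norm_eq_abs, abs_of_pos hc0]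
        rw [h2c, div_mul_cancel₀ _ (by positivity : (2*c : ℝ) ≠ 0)]
        calc ‖pz + pz⁻¹‖ ≤ ‖pz‖ + ‖pz⁻¹‖ :=
              norm_add_le _ _
          _ = r + r⁻¹ := by rw [norm_inv, ← hr]
      have hK : r^2 * (2*‖w‖ + 1) ≤ 25/7 := by
        have h3 : ‖w‖ * (2*c) * r ≤ (r + r⁻¹) * r :=
          mul_le_mul_of_nonneg_right habsw hrpos.le
        have h4 : (r + r⁻¹) * r = r^2 + 1 := by
          field_simp
        rw [h4] at h3
        nlinarith [mul_nonneg (sub_nonneg.2 hc7) (mul_nonneg hu0 hrpos.le),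
          mul_nonneg (mul_nonneg hu0 hrpos.le) (sub_nonneg.2 hr1),
          mul_nonneg hu0 hrpos.le]
      have hcheb := (cheb_upper w m).1
      have hPtz : ‖Ptilde m δ z‖ = r^(2*m) * ‖(Polynomial.Chebyshev.T ℂ (m:ℤ)).eval w‖ := by
        rw [Ptilde, ← hc, ← hpz, ← hw, norm_mul, norm_pow, ← hr]
      rw [hPtz, pow_mul]
      calc (r^2)^m * ‖(Polynomial.Chebyshev.T ℂ (m:ℤ)).eval w‖
          ≤ (r^2)^m * (2*‖w‖ + 1)^m :=
            mul_le_mul_of_nonneg_left hcheb (by positivity)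
        _ = (r^2*(2*‖w‖+1))^m := (mul_pow _ _ _).symm
        _ ≤ (25/7)^m := pow_le_pow_left₀ (by positivity) hK m
  calc Real.exp (↑m * δ / 12) * ‖Ptilde m δ z‖
      ≤ Real.exp (δ/12)^m * (25/7)^m := by
        rw [hexpm]
        exact mul_le_mul_of_nonneg_left hbound (by positivity)
    _ = (Real.exp (δ/12) * (25/7))^m := (mul_pow _ _ _).symm
    _ ≤ (p1^2 * (p1/2))^m := pow_le_pow_left₀ (by positivity) hfactor m
    _ ≤ p1^(2*m) * (Polynomial.Chebyshev.T ℝ (m:ℤ)).eval x₁ := hRlb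
    _ = (Ptilde m δ 1).re := by rw [hPt1, Complex.ofReal_re]
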